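/- Every general bipyramidal cone of dimension n ≥ 2 has exactly 2n − 2 extreme rays. -/

import Mathlib

open scoped BigOperators

/-- The cone of nonnegative rational combinations of elements of `S`. -/
def posSpan {n : ℕ} (S : Set (Fin n → ℚ)) : Set (Fin n → ℚ) :=
  {x | ∃ (k : ℕ) (c : Fin k → ℚ) (b : Fin k → (Fin n → ℚ)),
    (∀ i, 0 ≤ c i) ∧ (∀ i, b i ∈ S) ∧ x = ∑ i, c i • b i}

/-- A rational polyhedral cone: `posSpan` of a finite set. -/
def IsPolyCone {n : ℕ} (σ : Set (Fin n → ℚ)) : Prop :=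
  ∃ B : Finset (Fin n → ℚ), σ = posSpan (B : Set (Fin n → ℚ))

/-- A cone is strongly convex if `σ ∩ (-σ) = {0}`. -/
def StronglyConvex {n : ℕ} (σ : Set (Fin n → ℚ)) : Prop :=
  ∀ x, x ∈ σ → -x ∈ σ → x = 0

/-- dot product in `ℚ^n`. -/
def dotQ {n : ℕ} (c x : Fin n → ℚ) : ℚ := ∑ i, c i * x i

/-- `R` is an extreme ray of `σ`: a one-dimensional face cut out by a
supporting vector `c`. -/
def IsExtremeRay {n : ℕ} (σ R : Set (Fin n → ℚ)) : Prop :=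
  ∃ c : Fin n → ℚ, (∀ x ∈ σ, 0 ≤ dotQ c x) ∧
    R = {x ∈ σ | dotQ c x = 0} ∧
    Module.finrank ℚ (Submodule.span ℚ R) = 1

/-- The dimension of a cone: dimension of its rational linear span. -/
noncomputable def coneDim {n : ℕ} (σ : Set (Fin n → ℚ)) : ℕ :=
  Module.finrank ℚ (Submodule.span ℚ σ)

/-- `σ` is the direct sum of `σ₁` and `σ₂` along `a`. -/
def IsDirectSumAlong {n : ℕ} (σ₁ σ₂ σ : Set (Fin n → ℚ)) (a : Fin n → ℚ) : Prop :=
  a ∈ σ₁ ∩ σ₂ ∧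
  Submodule.span ℚ σ₁ ⊓ Submodule.span ℚ σ₂ = Submodule.span ℚ {a} ∧
  σ = posSpan (σ₁ ∪ σ₂)

/-- `σ` is a direct sum of `σ₁` and `σ₂`. -/
def IsDirectSum {n : ℕ} (σ₁ σ₂ σ : Set (Fin n → ℚ)) : Prop :=
  ∃ a, IsDirectSumAlong σ₁ σ₂ σ a

/-- `a` lies on an extreme ray of `σ`. -/
def OnExtremeRay {n : ℕ} (σ : Set (Fin n → ℚ)) (a : Fin n → ℚ) : Prop :=
  ∃ R, IsExtremeRay σ R ∧ a ∈ R

/-- The ray `ℚ⁺ r`. -/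
def rayOf {n : ℕ} (r : Fin n → ℚ) : Set (Fin n → ℚ) :=
  {x | ∃ q : ℚ, 0 ≤ q ∧ x = q • r}

/-- General bipyramidal cones: the smallest class of cones containing all
2-simplex cones and closed under direct sum of internal type. -/
inductive GenBipyramidal {n : ℕ} : Set (Fin n → ℚ) → Prop
  | simplex2 (r₁ r₂ : Fin n → ℚ) (h : LinearIndependent ℚ ![r₁, r₂]) :
      GenBipyramidal (posSpan {r₁, r₂})
  | internal (σ₁ σ₂ : Set (Fin n → ℚ)) (a : Fin n → ℚ)
      (h₁ : GenBipyramidal σ₁) (h₂ : GenBipyramidal σ₂)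
      (hds : IsDirectSumAlong σ₁ σ₂ (posSpan (σ₁ ∪ σ₂)) a)
      (hint₁ : ¬ OnExtremeRay σ₁ a) (hint₂ : ¬ OnExtremeRay σ₂ a) :
      GenBipyramidal (posSpan (σ₁ ∪ σ₂))

/-- The smallest class of cones containing all rational simplex cones and
closed under direct sum (the class of complete intersection cones). -/
inductive CICone {n : ℕ} : Set (Fin n → ℚ) → Prop
  | simplex (s : ℕ) (r : Fin s → (Fin n → ℚ)) (h : LinearIndependent ℚ r) :
      CICone (posSpan (Set.range r))
  | dsum (σ₁ σ₂ : Set (Fin n → ℚ)) (h₁ : CICone σ₁) (h₂ : CICone σ₂)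
      (hds : IsDirectSum σ₁ σ₂ (posSpan (σ₁ ∪ σ₂))) :
      CICone (posSpan (σ₁ ∪ σ₂))

namespace ConeAux

variable {n : ℕ}

lemma subset_posSpan (S : Set (Fin n → ℚ)) : S ⊆ posSpan S := by
  intro x hx
  exact ⟨1, fun _ => 1, fun _ => x, fun _ => zero_le_one, fun _ => hx, by simp⟩

lemma zero_mem_posSpan (S : Set (Fin n → ℚ)) : (0 : Fin n → ℚ) ∈ posSpan S :=
  ⟨0, fun i => i.elim0, fun i => i.elim0, fun i => i.elim0, fun i => i.elim0, by simp⟩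

lemma add_mem_posSpan {S : Set (Fin n → ℚ)} {x y : Fin n → ℚ}
    (hx : x ∈ posSpan S) (hy : y ∈ posSpan S) : x + y ∈ posSpan S := by
  obtain ⟨k, c, b, hc, hb, rfl⟩ := hx
  obtain ⟨l, d, e, hd, he, rfl⟩ := hy
  refine ⟨k + l, Fin.append c d, Fin.append b e, ?_, ?_, ?_⟩
  · intro i
    refine Fin.addCases (fun j => ?_) (fun j => ?_) i <;>
      simp [Fin.append_left, Fin.append_right, hc, hd]
  · intro i
    refine Fin.addCases (fun j => ?_) (fun j => ?_) i <;>
      simp [Fin.append_left, Fin.append_right, hb, he]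
  · rw [Fin.sum_univ_add]
    simp [Fin.append_left, Fin.append_right]

lemma smul_mem_posSpan {S : Set (Fin n → ℚ)} {x : Fin n → ℚ} {q : ℚ}
    (hq : 0 ≤ q) (hx : x ∈ posSpan S) : q • x ∈ posSpan S := by
  obtain ⟨k, c, b, hc, hb, rfl⟩ := hx
  refine ⟨k, fun i => q * c i, b, fun i => mul_nonneg hq (hc i), hb, ?_⟩
  rw [Finset.smul_sum]
  simp [smul_smul]

lemma posSpan_subset_span (S : Set (Fin n → ℚ)) :
    posSpan S ⊆ (Submodule.span ℚ S : Set (Fin n → ℚ)) := by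
  rintro x ⟨k, c, b, hc, hb, rfl⟩
  exact Submodule.sum_mem _ fun i _ =>
    Submodule.smul_mem _ _ (Submodule.subset_span (hb i))

lemma span_posSpan (S : Set (Fin n → ℚ)) :
    Submodule.span ℚ (posSpan S) = Submodule.span ℚ S :=
  le_antisymm (Submodule.span_le.2 (posSpan_subset_span S))
    (Submodule.span_mono (subset_posSpan S))

lemma dotQ_add (c x y : Fin n → ℚ) : dotQ c (x + y) = dotQ c x + dotQ c y := by
  simp [dotQ, mul_add, Finset.sum_add_distrib]

lemma dotQ_smul (c x : Fin n → ℚ) (q : ℚ) : dotQ c (q • x) = q * dotQ c x := by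
  simp only [dotQ, Finset.mul_sum, Pi.smul_apply, smul_eq_mul]
  exact Finset.sum_congr rfl fun i _ => by ring

lemma dotQ_zero (c : Fin n → ℚ) : dotQ c (0 : Fin n → ℚ) = 0 := by simp [dotQ]

lemma exists_dot_eq (F : (Fin n → ℚ) →ₗ[ℚ] ℚ) : ∃ c : Fin n → ℚ, ∀ x, dotQ c x = F x := by
  refine ⟨fun i => F (Pi.single i 1), fun x => ?_⟩
  conv_rhs => rw [← Finset.univ_sum_single x]
  rw [map_sum]
  refine Finset.sum_congr rfl fun i _ => ?_
  have : Pi.single i (x i) = x i • (Pi.single i (1 : ℚ) : Fin n → ℚ) := by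
    rw [← Pi.single_smul]; simp
  rw [this, map_smul]
  simp [dotQ, mul_comm]

end ConeAux
namespace ConeAux

variable {n : ℕ}

lemma mem_posSpan_pair {r₁ r₂ x : Fin n → ℚ} :
    x ∈ posSpan {r₁, r₂} ↔ ∃ α β : ℚ, 0 ≤ α ∧ 0 ≤ β ∧ x = α • r₁ + β • r₂ := by
  constructor
  · rintro ⟨k, c, b, hc, hb, rfl⟩
    refine ⟨∑ i, if b i = r₁ then c i else 0, ∑ i, if b i = r₁ then 0 else c i,
      Finset.sum_nonneg fun i _ => by split <;> simp [hc i],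
      Finset.sum_nonneg fun i _ => by split <;> simp [hc i], ?_⟩
    rw [Finset.sum_smul, Finset.sum_smul, ← Finset.sum_add_distrib]
    refine Finset.sum_congr rfl fun i _ => ?_
    rcases hb i with h | h
    · simp [h]
    · simp only [Set.mem_singleton_iff] at h
      by_cases h' : b i = r₁
      · simp [h']
      · rw [h] at h' ⊢
        simp [h']
  · rintro ⟨α, β, hα, hβ, rfl⟩
    exact add_mem_posSpan
      (smul_mem_posSpan hα (subset_posSpan _ (by simp)))
      (smul_mem_posSpan hβ (subset_posSpan _ (by simp)))

lemma mem_posSpan_union {S₁ S₂ : Set (Fin n → ℚ)} {x : Fin n → ℚ} :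
    x ∈ posSpan (posSpan S₁ ∪ posSpan S₂) ↔
      ∃ x₁ ∈ posSpan S₁, ∃ x₂ ∈ posSpan S₂, x = x₁ + x₂ := by
  classical
  constructor
  · rintro ⟨k, c, b, hc, hb, rfl⟩
    refine ⟨∑ i, if b i ∈ posSpan S₁ then c i • b i else 0, ?_,
            ∑ i, if b i ∈ posSpan S₁ then 0 else c i • b i, ?_, ?_⟩
    · refine Finset.sum_induction _ (· ∈ posSpan S₁)
        (fun _ _ => add_mem_posSpan) (zero_mem_posSpan _) fun i _ => ?_
      split
      · next h => exact smul_mem_posSpan (hc i) h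
      · exact zero_mem_posSpan _
    · refine Finset.sum_induction _ (· ∈ posSpan S₂)
        (fun _ _ => add_mem_posSpan) (zero_mem_posSpan _) fun i _ => ?_
      split
      · exact zero_mem_posSpan _
      · next h => exact smul_mem_posSpan (hc i) ((hb i).resolve_left h)
    · rw [← Finset.sum_add_distrib]
      refine Finset.sum_congr rfl fun i _ => ?_
      split <;> simp
  · rintro ⟨x₁, h₁, x₂, h₂, rfl⟩
    exact add_mem_posSpan
      (by
        have : posSpan S₁ ⊆ posSpan (posSpan S₁ ∪ posSpan S₂) :=
          (Set.subset_union_left).trans (subset_posSpan _)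
        exact this h₁)
      (by
        have : posSpan S₂ ⊆ posSpan (posSpan S₁ ∪ posSpan S₂) :=
          (Set.subset_union_right).trans (subset_posSpan _)
        exact this h₂)

/-- Glue two functionals agreeing on the intersection of two subspaces. -/
lemma glue_functionals {U V : Submodule ℚ (Fin n → ℚ)} (f g : (Fin n → ℚ) →ₗ[ℚ] ℚ)
    (hfg : ∀ x ∈ U ⊓ V, f x = g x) :
    ∃ F : (Fin n → ℚ) →ₗ[ℚ] ℚ, (∀ x ∈ U, F x = f x) ∧ (∀ x ∈ V, F x = g x) := by
  classical
  set φ : V →ₗ[ℚ] ((Fin n → ℚ) ⧸ U) := U.mkQ.comp V.subtype with hφ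
  set ψ : V →ₗ[ℚ] ℚ := (g - f).comp V.subtype with hψ
  have hker : LinearMap.ker φ ≤ LinearMap.ker ψ := by
    intro v hv
    have hvU : (v : Fin n → ℚ) ∈ U := by
      simpa [hφ, LinearMap.mem_ker, Submodule.Quotient.mk_eq_zero] using hv
    have : f (v : Fin n → ℚ) = g (v : Fin n → ℚ) := hfg _ ⟨hvU, v.2⟩
    simp [hψ, LinearMap.mem_ker, this]
  set χ₀ : (V ⧸ LinearMap.ker φ) →ₗ[ℚ] ℚ := (LinearMap.ker φ).liftQ ψ hker with hχ₀
  set e := φ.quotKerEquivRange with he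
  set χ : (LinearMap.range φ : Submodule ℚ ((Fin n → ℚ) ⧸ U)) →ₗ[ℚ] ℚ :=
    χ₀.comp (e.symm : (LinearMap.range φ) →ₗ[ℚ] (V ⧸ LinearMap.ker φ)) with hχ
  obtain ⟨h', hh'⟩ := χ.exists_extend
  refine ⟨f + h'.comp U.mkQ, fun x hx => ?_, fun x hx => ?_⟩
  · have : U.mkQ x = 0 := (Submodule.Quotient.mk_eq_zero U).2 hx
    simp [this]
  · have hmem : U.mkQ x ∈ LinearMap.range φ := ⟨⟨x, hx⟩, rfl⟩
    have h1 : h' (U.mkQ x) = χ ⟨U.mkQ x, hmem⟩ := by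
      have := congrArg (fun (F : (LinearMap.range φ) →ₗ[ℚ] ℚ) => F ⟨U.mkQ x, hmem⟩) hh'
      simpa using this
    have h2 : e (Submodule.Quotient.mk (⟨x, hx⟩ : V)) = ⟨U.mkQ x, hmem⟩ := by
      apply Subtype.ext
      simp [he, LinearMap.quotKerEquivRange, hφ]
    have h3 : χ ⟨U.mkQ x, hmem⟩ = χ₀ (Submodule.Quotient.mk (⟨x, hx⟩ : V)) := by
      rw [hχ]
      simp only [LinearMap.comp_apply]
      rw [← h2]
      simp
    have h4 : χ₀ (Submodule.Quotient.mk (⟨x, hx⟩ : V)) = g x - f x := by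
      simp [hχ₀, hψ]
    simp only [LinearMap.add_apply, LinearMap.comp_apply, h1, h3, h4]
    ring

end ConeAux
namespace ConeAux

variable {n : ℕ}

lemma exists_dual_pair {r₁ r₂ : Fin n → ℚ} (h : LinearIndependent ℚ ![r₁, r₂])
    (v : Fin 2 → ℚ) :
    ∃ F : (Fin n → ℚ) →ₗ[ℚ] ℚ, F r₁ = v 0 ∧ F r₂ = v 1 := by
  set b := Module.Basis.span h with hb
  set f₀ : (Submodule.span ℚ (Set.range ![r₁, r₂])) →ₗ[ℚ] ℚ := b.constr ℚ v with hf₀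
  obtain ⟨F, hF⟩ := f₀.exists_extend
  have hm1 : r₁ ∈ Submodule.span ℚ (Set.range ![r₁, r₂]) :=
    Submodule.subset_span ⟨0, rfl⟩
  have hm2 : r₂ ∈ Submodule.span ℚ (Set.range ![r₁, r₂]) :=
    Submodule.subset_span ⟨1, rfl⟩
  have key : ∀ (x : Fin n → ℚ) (hx : x ∈ Submodule.span ℚ (Set.range ![r₁, r₂]))
      (i : Fin 2), x = ![r₁, r₂] i → F x = v i := by
    intro x hx i hxi
    have h1 : (⟨x, hx⟩ : Submodule.span ℚ (Set.range ![r₁, r₂])) = b i := by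
      apply Subtype.ext
      rw [hb, Module.Basis.span_apply]
      exact hxi
    have h2 := congrArg (fun (G : (Submodule.span ℚ (Set.range ![r₁, r₂])) →ₗ[ℚ] ℚ)
      => G ⟨x, hx⟩) hF
    simp only [LinearMap.comp_apply, Submodule.subtype_apply] at h2
    rw [h2, h1, hf₀, Module.Basis.constr_basis]
  exact ⟨F, key r₁ hm1 0 rfl, key r₂ hm2 1 rfl⟩

lemma genBipyramidal_posSpan {σ : Set (Fin n → ℚ)} (h : GenBipyramidal σ) :
    ∃ S, σ = posSpan S := by
  cases h with
  | simplex2 r₁ r₂ h => exact ⟨_, rfl⟩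
  | internal σ₁ σ₂ a h₁ h₂ hds hint₁ hint₂ => exact ⟨_, rfl⟩

lemma mem_union_decomp {σ₁ σ₂ : Set (Fin n → ℚ)}
    (h₁ : ∃ S, σ₁ = posSpan S) (h₂ : ∃ S, σ₂ = posSpan S) {x : Fin n → ℚ} :
    x ∈ posSpan (σ₁ ∪ σ₂) ↔ ∃ x₁ ∈ σ₁, ∃ x₂ ∈ σ₂, x = x₁ + x₂ := by
  obtain ⟨S₁, rfl⟩ := h₁
  obtain ⟨S₂, rfl⟩ := h₂
  exact mem_posSpan_union

lemma genBipyramidal_posFun {σ : Set (Fin n → ℚ)} (h : GenBipyramidal σ) :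
    ∃ F : (Fin n → ℚ) →ₗ[ℚ] ℚ, (∀ x ∈ σ, 0 ≤ F x) ∧ ∀ x ∈ σ, F x = 0 → x = 0 := by
  induction h with
  | simplex2 r₁ r₂ h =>
    obtain ⟨F, h1, h2⟩ := exists_dual_pair h ![1, 1]
    simp only [Matrix.cons_val_zero, Matrix.cons_val_one, Matrix.head_cons] at h1 h2
    refine ⟨F, fun x hx => ?_, fun x hx hx0 => ?_⟩
    · obtain ⟨α, β, hα, hβ, rfl⟩ := mem_posSpan_pair.1 hx
      simp only [map_add, map_smul, h1, h2, smul_eq_mul, mul_one]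
      linarith
    · obtain ⟨α, β, hα, hβ, rfl⟩ := mem_posSpan_pair.1 hx
      simp only [map_add, map_smul, h1, h2, smul_eq_mul, mul_one] at hx0
      have hα0 : α = 0 := by linarith
      have hβ0 : β = 0 := by linarith
      simp [hα0, hβ0]
  | internal σ₁ σ₂ a h₁ h₂ hds hint₁ hint₂ ih₁ ih₂ =>
    obtain ⟨F₁, hF₁n, hF₁z⟩ := ih₁
    obtain ⟨F₂, hF₂n, hF₂z⟩ := ih₂
    obtain ⟨⟨ha₁, ha₂⟩, hspan, -⟩ := hds
    set μ : ℚ := if a = 0 then 1 else F₁ a / F₂ a with hμ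
    have hμpos : 0 < μ := by
      rw [hμ]
      split
      · norm_num
      · next ha =>
        have h2 : 0 < F₂ a := lt_of_le_of_ne (hF₂n a ha₂) fun hh => ha (hF₂z a ha₂ hh.symm)
        have h1 : 0 < F₁ a := lt_of_le_of_ne (hF₁n a ha₁) fun hh => ha (hF₁z a ha₁ hh.symm)
        positivity
    have hagree : ∀ x ∈ Submodule.span ℚ σ₁ ⊓ Submodule.span ℚ σ₂, F₁ x = (μ • F₂) x := by
      intro x hx
      rw [hspan, Submodule.mem_span_singleton] at hx
      obtain ⟨t, rfl⟩ := hx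
      by_cases ha : a = 0
      · simp [ha]
      · have h2 : F₂ a ≠ 0 := fun hh => ha (hF₂z a ha₂ hh)
        simp only [map_smul, smul_eq_mul, LinearMap.smul_apply, hμ, if_neg ha]
        field_simp
    obtain ⟨F, hFU, hFV⟩ := glue_functionals F₁ (μ • F₂) hagree
    have hdec : ∀ x : Fin n → ℚ, x ∈ posSpan (σ₁ ∪ σ₂) ↔
        ∃ x₁ ∈ σ₁, ∃ x₂ ∈ σ₂, x = x₁ + x₂ := fun x =>
      mem_union_decomp (genBipyramidal_posSpan h₁) (genBipyramidal_posSpan h₂)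
    refine ⟨F, fun x hx => ?_, fun x hx hx0 => ?_⟩
    · obtain ⟨x₁, hx₁, x₂, hx₂, rfl⟩ := (hdec _).1 hx
      rw [map_add, hFU x₁ (Submodule.subset_span hx₁), hFV x₂ (Submodule.subset_span hx₂)]
      have h1 : 0 ≤ F₁ x₁ := hF₁n x₁ hx₁
      have h2 : (0 : ℚ) ≤ μ * F₂ x₂ := mul_nonneg hμpos.le (hF₂n x₂ hx₂)
      simp only [LinearMap.smul_apply, smul_eq_mul]
      linarith
    · obtain ⟨x₁, hx₁, x₂, hx₂, rfl⟩ := (hdec _).1 hx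
      rw [map_add, hFU x₁ (Submodule.subset_span hx₁), hFV x₂ (Submodule.subset_span hx₂)] at hx0
      simp only [LinearMap.smul_apply, smul_eq_mul] at hx0
      have h1 : 0 ≤ F₁ x₁ := hF₁n x₁ hx₁
      have h2 : 0 ≤ μ * F₂ x₂ := mul_nonneg hμpos.le (hF₂n x₂ hx₂)
      have e1 : F₁ x₁ = 0 := by linarith
      have e2 : F₂ x₂ = 0 := by
        rcases mul_eq_zero.1 (by linarith : μ * F₂ x₂ = 0) with h | h
        · exact absurd h hμpos.ne'
        · exact h
      rw [hF₁z x₁ hx₁ e1, hF₂z x₂ hx₂ e2, add_zero]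

end ConeAux
namespace ConeAux

variable {n : ℕ}

lemma pair_swap {r₁ r₂ : Fin n → ℚ} (h : LinearIndependent ℚ ![r₁, r₂]) :
    LinearIndependent ℚ ![r₂, r₁] := by
  rw [LinearIndependent.pair_iff] at h ⊢
  intro s t hst
  obtain ⟨h1, h2⟩ := h t s (by rw [add_comm]; exact hst)
  exact ⟨h2, h1⟩

lemma span_rayOf (r : Fin n → ℚ) :
    Submodule.span ℚ (rayOf r) = Submodule.span ℚ ({r} : Set (Fin n → ℚ)) := by
  apply le_antisymm
  · apply Submodule.span_le.2
    rintro x ⟨q, hq, rfl⟩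
    exact Submodule.smul_mem _ _ (Submodule.subset_span rfl)
  · apply Submodule.span_le.2
    intro x hx
    rw [Set.mem_singleton_iff] at hx
    subst hx
    exact Submodule.subset_span ⟨1, zero_le_one, (one_smul _ _).symm⟩

lemma finrank_span_pair {r₁ r₂ : Fin n → ℚ} (h : LinearIndependent ℚ ![r₁, r₂]) :
    Module.finrank ℚ (Submodule.span ℚ ({r₁, r₂} : Set (Fin n → ℚ))) = 2 := by
  have hr : Set.range ![r₁, r₂] = {r₁, r₂} := by
    ext x
    simp only [Set.mem_range, Fin.exists_fin_two, Matrix.cons_val_zero, Matrix.cons_val_one,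
      Matrix.head_cons, Set.mem_insert_iff, Set.mem_singleton_iff]
    tauto
  rw [← hr, finrank_span_eq_card h]
  simp

lemma coneDim_simplex2 {r₁ r₂ : Fin n → ℚ} (h : LinearIndependent ℚ ![r₁, r₂]) :
    coneDim (posSpan {r₁, r₂}) = 2 := by
  rw [coneDim, span_posSpan]
  exact finrank_span_pair h

lemma rayOf_ne {r₁ r₂ : Fin n → ℚ} (h : LinearIndependent ℚ ![r₁, r₂]) :
    rayOf r₁ ≠ rayOf r₂ := by
  intro he
  have h1 : r₁ ∈ rayOf r₂ := he ▸ ⟨1, zero_le_one, (one_smul _ _).symm⟩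
  obtain ⟨q, hq, hqe⟩ := h1
  have := (LinearIndependent.pair_iff.1 h) 1 (-q) (by rw [hqe]; module)
  simp at this

lemma isExtremeRay_simplex_left {r₁ r₂ : Fin n → ℚ} (h : LinearIndependent ℚ ![r₁, r₂]) :
    IsExtremeRay (posSpan {r₁, r₂}) (rayOf r₁) := by
  obtain ⟨F, h1, h2⟩ := exists_dual_pair h ![0, 1]
  simp only [Matrix.cons_val_zero, Matrix.cons_val_one, Matrix.head_cons] at h1 h2
  obtain ⟨c, hc⟩ := exists_dot_eq F
  refine ⟨c, ?_, ?_, ?_⟩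
  · intro x hx
    obtain ⟨α, β, hα, hβ, rfl⟩ := mem_posSpan_pair.1 hx
    rw [hc]
    simp [map_add, map_smul, h1, h2, hβ]
  · ext x
    simp only [Set.mem_setOf_eq]
    constructor
    · rintro ⟨q, hq, rfl⟩
      refine ⟨mem_posSpan_pair.2 ⟨q, 0, hq, le_rfl, by simp⟩, ?_⟩
      rw [hc]
      simp [map_smul, h1]
    · rintro ⟨hx, hx0⟩
      obtain ⟨α, β, hα, hβ, rfl⟩ := mem_posSpan_pair.1 hx
      rw [hc] at hx0
      simp only [map_add, map_smul, h1, h2, smul_eq_mul, mul_zero, mul_one, zero_add] at hx0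
      exact ⟨α, hα, by simp [hx0]⟩
  · rw [span_rayOf]
    exact finrank_span_singleton (by simpa using h.ne_zero 0)

lemma isExtremeRay_simplex_right {r₁ r₂ : Fin n → ℚ} (h : LinearIndependent ℚ ![r₁, r₂]) :
    IsExtremeRay (posSpan {r₁, r₂}) (rayOf r₂) := by
  have := isExtremeRay_simplex_left (pair_swap h)
  rwa [Set.pair_comm r₂ r₁] at this

lemma extremeRay_simplex2_eq {r₁ r₂ : Fin n → ℚ} (h : LinearIndependent ℚ ![r₁, r₂])
    {R : Set (Fin n → ℚ)} (hR : IsExtremeRay (posSpan {r₁, r₂}) R) :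
    R = rayOf r₁ ∨ R = rayOf r₂ := by
  obtain ⟨c, hcpos, hzero, hrank⟩ := hR
  have hm1 : r₁ ∈ posSpan {r₁, r₂} := subset_posSpan _ (by simp)
  have hm2 : r₂ ∈ posSpan {r₁, r₂} := subset_posSpan _ (by simp)
  have hc1 : 0 ≤ dotQ c r₁ := hcpos _ hm1
  have hc2 : 0 ≤ dotQ c r₂ := hcpos _ hm2
  have key : ∀ α β : ℚ, dotQ c (α • r₁ + β • r₂) = α * dotQ c r₁ + β * dotQ c r₂ := by
    intro α β
    rw [dotQ_add, dotQ_smul, dotQ_smul]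
  rcases eq_or_lt_of_le hc1 with h1 | h1
  · rcases eq_or_lt_of_le hc2 with h2 | h2
    · exfalso
      have hRσ : R = posSpan {r₁, r₂} := by
        rw [hzero]
        ext x
        simp only [Set.mem_setOf_eq]
        refine ⟨fun h => h.1, fun hx => ⟨hx, ?_⟩⟩
        obtain ⟨α, β, hα, hβ, rfl⟩ := mem_posSpan_pair.1 hx
        rw [key, ← h1, ← h2]
        ring
      rw [hRσ, span_posSpan, finrank_span_pair h] at hrank
      omega
    · left
      rw [hzero]
      ext x
      simp only [Set.mem_setOf_eq]
      constructor
      · rintro ⟨hx, hx0⟩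
        obtain ⟨α, β, hα, hβ, rfl⟩ := mem_posSpan_pair.1 hx
        rw [key, ← h1] at hx0
        have hβ0 : β = 0 := by nlinarith
        exact ⟨α, hα, by simp [hβ0]⟩
      · rintro ⟨q, hq, rfl⟩
        refine ⟨mem_posSpan_pair.2 ⟨q, 0, hq, le_rfl, by simp⟩, ?_⟩
        have he : (q • r₁ : Fin n → ℚ) = q • r₁ + (0:ℚ) • r₂ := by simp
        rw [he, key, ← h1]
        ring
  · rcases eq_or_lt_of_le hc2 with h2 | h2
    · right
      rw [hzero]
      ext x
      simp only [Set.mem_setOf_eq]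
      constructor
      · rintro ⟨hx, hx0⟩
        obtain ⟨α, β, hα, hβ, rfl⟩ := mem_posSpan_pair.1 hx
        rw [key, ← h2] at hx0
        have hα0 : α = 0 := by nlinarith
        exact ⟨β, hβ, by simp [hα0]⟩
      · rintro ⟨q, hq, rfl⟩
        refine ⟨mem_posSpan_pair.2 ⟨0, q, le_rfl, hq, by simp⟩, ?_⟩
        have he : (q • r₂ : Fin n → ℚ) = (0:ℚ) • r₁ + q • r₂ := by simp
        rw [he, key, ← h2]
        ring
    · exfalso
      have hsub : R ⊆ {0} := by
        rw [hzero]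
        rintro x ⟨hx, hx0⟩
        obtain ⟨α, β, hα, hβ, rfl⟩ := mem_posSpan_pair.1 hx
        rw [key] at hx0
        have hα0 : α = 0 := by nlinarith
        have hβ0 : β = 0 := by nlinarith
        simp [hα0, hβ0]
      have hle : Submodule.span ℚ R ≤ ⊥ := by
        rw [← Submodule.span_zero_singleton (R := ℚ)]
        exact Submodule.span_mono hsub
      rw [le_bot_iff] at hle
      rw [hle, finrank_bot] at hrank
      omega

lemma extremeRays_simplex2 {r₁ r₂ : Fin n → ℚ} (h : LinearIndependent ℚ ![r₁, r₂]) :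
    {R | IsExtremeRay (posSpan {r₁, r₂}) R} = {rayOf r₁, rayOf r₂} := by
  ext R
  simp only [Set.mem_setOf_eq, Set.mem_insert_iff, Set.mem_singleton_iff]
  constructor
  · exact extremeRay_simplex2_eq h
  · rintro (rfl | rfl)
    · exact isExtremeRay_simplex_left h
    · exact isExtremeRay_simplex_right h

end ConeAux
namespace ConeAux

variable {n : ℕ}

def dotLin (c : Fin n → ℚ) : (Fin n → ℚ) →ₗ[ℚ] ℚ where
  toFun x := dotQ c x
  map_add' x y := dotQ_add c x y
  map_smul' q x := by simp [dotQ_smul]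

@[simp] lemma dotLin_apply (c x : Fin n → ℚ) : dotLin c x = dotQ c x := rfl

lemma exists_ne_zero_of_rank_one {R : Set (Fin n → ℚ)}
    (hrank : Module.finrank ℚ (Submodule.span ℚ R) = 1) : ∃ r ∈ R, r ≠ 0 := by
  by_contra hc
  push_neg at hc
  have hsub : R ⊆ {0} := fun x hx => hc x hx
  have hle : Submodule.span ℚ R ≤ ⊥ := by
    rw [← Submodule.span_zero_singleton (R := ℚ)]
    exact Submodule.span_mono hsub
  rw [le_bot_iff] at hle
  rw [hle, finrank_bot] at hrank
  omega

lemma mem_span_of_rank_one {R : Set (Fin n → ℚ)} {r : Fin n → ℚ}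
    (hrank : Module.finrank ℚ (Submodule.span ℚ R) = 1) (hr : r ∈ R) (hr0 : r ≠ 0)
    {x : Fin n → ℚ} (hx : x ∈ Submodule.span ℚ R) : ∃ q : ℚ, x = q • r := by
  have h1 : Submodule.span ℚ ({r} : Set (Fin n → ℚ)) ≤ Submodule.span ℚ R :=
    Submodule.span_mono (Set.singleton_subset_iff.2 hr)
  have heq : Submodule.span ℚ ({r} : Set (Fin n → ℚ)) = Submodule.span ℚ R :=
    Submodule.eq_of_le_of_finrank_eq h1 (by rw [finrank_span_singleton hr0, hrank])
  rw [← heq, Submodule.mem_span_singleton] at hx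
  obtain ⟨q, hq⟩ := hx
  exact ⟨q, hq.symm⟩

lemma isExtremeRay_restrict {σ' σ R : Set (Fin n → ℚ)} (hsub : σ' ⊆ σ)
    {c : Fin n → ℚ} (hcpos : ∀ x ∈ σ, 0 ≤ dotQ c x) (hzero : R = {x ∈ σ | dotQ c x = 0})
    (hrank : Module.finrank ℚ (Submodule.span ℚ R) = 1) (hRσ' : R ⊆ σ') :
    IsExtremeRay σ' R := by
  refine ⟨c, fun x hx => hcpos x (hsub hx), ?_, hrank⟩
  ext x
  constructor
  · intro hx
    exact ⟨hRσ' hx, (hzero ▸ hx : x ∈ {x ∈ σ | dotQ c x = 0}).2⟩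
  · rintro ⟨h1, h2⟩
    rw [hzero]
    exact ⟨hsub h1, h2⟩

lemma extremeRay_lift {σ₁ σ₂ : Set (Fin n → ℚ)} {a : Fin n → ℚ}
    (hS₁ : ∃ S, σ₁ = posSpan S) (hS₂ : ∃ S, σ₂ = posSpan S)
    (ha₁ : a ∈ σ₁) (ha₂ : a ∈ σ₂) (ha : a ≠ 0)
    (hspan : Submodule.span ℚ σ₁ ⊓ Submodule.span ℚ σ₂ = Submodule.span ℚ {a})
    (hint₁ : ¬ OnExtremeRay σ₁ a)
    (hpos₂ : ∃ F₂ : (Fin n → ℚ) →ₗ[ℚ] ℚ, (∀ x ∈ σ₂, 0 ≤ F₂ x) ∧ ∀ x ∈ σ₂, F₂ x = 0 → x = 0)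
    {R : Set (Fin n → ℚ)} (hR : IsExtremeRay σ₁ R) :
    IsExtremeRay (posSpan (σ₁ ∪ σ₂)) R := by
  obtain ⟨c₁, hc₁pos, hc₁zero, hrank⟩ := hR
  obtain ⟨F₂, hF₂n, hF₂z⟩ := hpos₂
  have hca : 0 < dotQ c₁ a := by
    rcases eq_or_lt_of_le (hc₁pos a ha₁) with h0 | h0
    · exact absurd ⟨R, ⟨c₁, hc₁pos, hc₁zero, hrank⟩,
        by rw [hc₁zero]; exact ⟨ha₁, h0.symm⟩⟩ hint₁
    · exact h0
  have hF₂a : 0 < F₂ a := lt_of_le_of_ne (hF₂n a ha₂) fun hh => ha (hF₂z a ha₂ hh.symm)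
  set μ : ℚ := dotQ c₁ a / F₂ a with hμ
  have hμpos : 0 < μ := div_pos hca hF₂a
  have hagree : ∀ x ∈ Submodule.span ℚ σ₁ ⊓ Submodule.span ℚ σ₂,
      dotLin c₁ x = (μ • F₂) x := by
    intro x hx
    rw [hspan, Submodule.mem_span_singleton] at hx
    obtain ⟨t, rfl⟩ := hx
    simp only [dotLin_apply, dotQ_smul, LinearMap.smul_apply, map_smul, smul_eq_mul, hμ]
    field_simp
  obtain ⟨F, hFU, hFV⟩ := glue_functionals (dotLin c₁) (μ • F₂) hagree
  obtain ⟨c, hc⟩ := exists_dot_eq F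
  have hdec : ∀ x : Fin n → ℚ, x ∈ posSpan (σ₁ ∪ σ₂) ↔
      ∃ x₁ ∈ σ₁, ∃ x₂ ∈ σ₂, x = x₁ + x₂ := fun x => mem_union_decomp hS₁ hS₂
  refine ⟨c, ?_, ?_, hrank⟩
  · intro x hx
    obtain ⟨x₁, h1, x₂, h2, rfl⟩ := (hdec _).1 hx
    rw [hc, map_add, hFU x₁ (Submodule.subset_span h1), hFV x₂ (Submodule.subset_span h2)]
    have e1 : 0 ≤ dotQ c₁ x₁ := hc₁pos x₁ h1
    have e2 : (0 : ℚ) ≤ μ * F₂ x₂ := mul_nonneg hμpos.le (hF₂n x₂ h2)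
    simp only [dotLin_apply, LinearMap.smul_apply, smul_eq_mul]
    linarith
  · rw [hc₁zero]
    ext x
    simp only [Set.mem_setOf_eq]
    constructor
    · rintro ⟨hx1, hx0⟩
      refine ⟨subset_posSpan _ (Or.inl hx1), ?_⟩
      rw [hc, hFU x (Submodule.subset_span hx1), dotLin_apply]
      exact hx0
    · rintro ⟨hx, hx0⟩
      obtain ⟨x₁, h1, x₂, h2, rfl⟩ := (hdec _).1 hx
      rw [hc, map_add, hFU x₁ (Submodule.subset_span h1),
        hFV x₂ (Submodule.subset_span h2)] at hx0
      simp only [dotLin_apply, LinearMap.smul_apply, smul_eq_mul] at hx0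
      have e1 : 0 ≤ dotQ c₁ x₁ := hc₁pos x₁ h1
      have e2 : (0 : ℚ) ≤ μ * F₂ x₂ := mul_nonneg hμpos.le (hF₂n x₂ h2)
      have z1 : dotQ c₁ x₁ = 0 := by linarith
      have z2 : F₂ x₂ = 0 := by
        rcases mul_eq_zero.1 (by linarith : μ * F₂ x₂ = 0) with h | h
        · exact absurd h hμpos.ne'
        · exact h
      have hx₂0 : x₂ = 0 := hF₂z x₂ h2 z2
      rw [hx₂0, add_zero]
      exact ⟨h1, z1⟩

lemma extremeRay_descend {σ₁ σ₂ : Set (Fin n → ℚ)} {a : Fin n → ℚ}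
    (hS₁ : ∃ S, σ₁ = posSpan S) (hS₂ : ∃ S, σ₂ = posSpan S)
    (ha₁ : a ∈ σ₁)
    (hspan : Submodule.span ℚ σ₁ ⊓ Submodule.span ℚ σ₂ = Submodule.span ℚ {a})
    (hint₁ : ¬ OnExtremeRay σ₁ a)
    {R : Set (Fin n → ℚ)} (hR : IsExtremeRay (posSpan (σ₁ ∪ σ₂)) R) :
    IsExtremeRay σ₁ R ∨ IsExtremeRay σ₂ R := by
  obtain ⟨c, hcpos, hzero, hrank⟩ := hR
  have hdec : ∀ x : Fin n → ℚ, x ∈ posSpan (σ₁ ∪ σ₂) ↔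
      ∃ x₁ ∈ σ₁, ∃ x₂ ∈ σ₂, x = x₁ + x₂ := fun x => mem_union_decomp hS₁ hS₂
  have hsub₁ : σ₁ ⊆ posSpan (σ₁ ∪ σ₂) := Set.subset_union_left.trans (subset_posSpan _)
  have hsub₂ : σ₂ ⊆ posSpan (σ₁ ∪ σ₂) := Set.subset_union_right.trans (subset_posSpan _)
  obtain ⟨r, hrR, hr0⟩ := exists_ne_zero_of_rank_one hrank
  have hcomp : ∀ x ∈ R, ∀ x₁ ∈ σ₁, ∀ x₂ ∈ σ₂, x = x₁ + x₂ → x₁ ∈ R ∧ x₂ ∈ R := by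
    intro x hx x₁ h1 x₂ h2 hxe
    have hx0 : dotQ c x = 0 := (hzero ▸ hx : x ∈ {x ∈ posSpan (σ₁ ∪ σ₂) | dotQ c x = 0}).2
    have e : dotQ c x₁ + dotQ c x₂ = 0 := by rw [← dotQ_add, ← hxe, hx0]
    have n1 : 0 ≤ dotQ c x₁ := hcpos _ (hsub₁ h1)
    have n2 : 0 ≤ dotQ c x₂ := hcpos _ (hsub₂ h2)
    constructor <;> rw [hzero]
    · exact ⟨hsub₁ h1, by linarith⟩
    · exact ⟨hsub₂ h2, by linarith⟩
  have hdirR : ∀ x ∈ R, ∃ q : ℚ, x = q • r := fun x hx =>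
    mem_span_of_rank_one hrank hrR hr0 (Submodule.subset_span hx)
  by_cases hA : R ⊆ σ₁
  · exact Or.inl (isExtremeRay_restrict hsub₁ hcpos hzero hrank hA)
  by_cases hB : R ⊆ σ₂
  · exact Or.inr (isExtremeRay_restrict hsub₂ hcpos hzero hrank hB)
  exfalso
  obtain ⟨x, hxR, hx1⟩ := Set.not_subset.1 hA
  obtain ⟨y, hyR, hy2⟩ := Set.not_subset.1 hB
  -- from x : r ∈ span σ₂
  have hrs₂ : r ∈ Submodule.span ℚ σ₂ := by
    obtain ⟨x₁, h1, x₂, h2, hxe⟩ := (hdec x).1 (hzero ▸ hxR :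
      x ∈ {x ∈ posSpan (σ₁ ∪ σ₂) | dotQ c x = 0}).1
    obtain ⟨-, hx₂R⟩ := hcomp x hxR x₁ h1 x₂ h2 hxe
    have hx₂0 : x₂ ≠ 0 := by
      intro h0
      rw [h0, add_zero] at hxe
      exact hx1 (hxe ▸ h1)
    obtain ⟨q, hq⟩ := hdirR x₂ hx₂R
    have hq0 : q ≠ 0 := by
      intro h0
      rw [h0, zero_smul] at hq
      exact hx₂0 hq
    have : r = q⁻¹ • x₂ := by rw [hq, smul_smul, inv_mul_cancel₀ hq0, one_smul]
    rw [this]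
    exact Submodule.smul_mem _ _ (Submodule.subset_span h2)
  have hrs₁ : r ∈ Submodule.span ℚ σ₁ := by
    obtain ⟨x₁, h1, x₂, h2, hxe⟩ := (hdec y).1 (hzero ▸ hyR :
      y ∈ {x ∈ posSpan (σ₁ ∪ σ₂) | dotQ c x = 0}).1
    obtain ⟨hx₁R, -⟩ := hcomp y hyR x₁ h1 x₂ h2 hxe
    have hx₁0 : x₁ ≠ 0 := by
      intro h0
      rw [h0, zero_add] at hxe
      exact hy2 (hxe ▸ h2)
    obtain ⟨q, hq⟩ := hdirR x₁ hx₁R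
    have hq0 : q ≠ 0 := by
      intro h0
      rw [h0, zero_smul] at hq
      exact hx₁0 hq
    have : r = q⁻¹ • x₁ := by rw [hq, smul_smul, inv_mul_cancel₀ hq0, one_smul]
    rw [this]
    exact Submodule.smul_mem _ _ (Submodule.subset_span h1)
  have hra : r ∈ Submodule.span ℚ ({a} : Set (Fin n → ℚ)) := hspan ▸ ⟨hrs₁, hrs₂⟩
  obtain ⟨t, ht⟩ := Submodule.mem_span_singleton.1 hra
  have ht0 : t ≠ 0 := fun h0 => hr0 (by rw [← ht, h0, zero_smul])
  have ha0 : a ≠ 0 := fun h0 => hr0 (by rw [← ht, h0, smul_zero])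
  have haR : a = t⁻¹ • r := by rw [← ht, smul_smul, inv_mul_cancel₀ ht0, one_smul]
  have hdotr : dotQ c r = 0 := (hzero ▸ hrR : r ∈ {x ∈ posSpan (σ₁ ∪ σ₂) | dotQ c x = 0}).2
  have hdota : dotQ c a = 0 := by rw [haR, dotQ_smul, hdotr, mul_zero]
  set R' : Set (Fin n → ℚ) := {x ∈ σ₁ | dotQ c x = 0} with hR'
  have hR'sub : R' ⊆ R := by
    rintro z ⟨hz1, hz2⟩
    rw [hzero]
    exact ⟨hsub₁ hz1, hz2⟩
  have haR' : a ∈ R' := ⟨ha₁, hdota⟩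
  have hrank' : Module.finrank ℚ (Submodule.span ℚ R') = 1 := by
    have hle : Module.finrank ℚ (Submodule.span ℚ R') ≤ 1 := by
      rw [← hrank]
      exact Submodule.finrank_mono (Submodule.span_mono hR'sub)
    have hge : 1 ≤ Module.finrank ℚ (Submodule.span ℚ R') := by
      have := Submodule.finrank_mono
        (Submodule.span_mono (Set.singleton_subset_iff.2 haR') :
          Submodule.span ℚ ({a} : Set (Fin n → ℚ)) ≤ Submodule.span ℚ R')
      rwa [finrank_span_singleton ha0] at this
    omega
  exact hint₁ ⟨R', ⟨c, fun z hz => hcpos z (hsub₁ hz), rfl, hrank'⟩, haR'⟩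

lemma extremeRay_not_both {σ₁ σ₂ : Set (Fin n → ℚ)} {a : Fin n → ℚ}
    (ha₁ : a ∈ σ₁)
    (hspan : Submodule.span ℚ σ₁ ⊓ Submodule.span ℚ σ₂ = Submodule.span ℚ {a})
    (hint₁ : ¬ OnExtremeRay σ₁ a)
    {R : Set (Fin n → ℚ)} (h1 : IsExtremeRay σ₁ R) (h2 : IsExtremeRay σ₂ R) : False := by
  obtain ⟨c₁, hp1, hz1, hrank⟩ := h1
  obtain ⟨c₂, hp2, hz2, -⟩ := h2
  obtain ⟨r, hrR, hr0⟩ := exists_ne_zero_of_rank_one hrank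
  have hrσ₁ : r ∈ σ₁ := (hz1 ▸ hrR : r ∈ {x ∈ σ₁ | dotQ c₁ x = 0}).1
  have hrσ₂ : r ∈ σ₂ := (hz2 ▸ hrR : r ∈ {x ∈ σ₂ | dotQ c₂ x = 0}).1
  have hra : r ∈ Submodule.span ℚ ({a} : Set (Fin n → ℚ)) :=
    hspan ▸ ⟨Submodule.subset_span hrσ₁, Submodule.subset_span hrσ₂⟩
  obtain ⟨t, ht⟩ := Submodule.mem_span_singleton.1 hra
  have ht0 : t ≠ 0 := fun h0 => hr0 (by rw [← ht, h0, zero_smul])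
  have haR : a = t⁻¹ • r := by rw [← ht, smul_smul, inv_mul_cancel₀ ht0, one_smul]
  have hdota : dotQ c₁ a = 0 := by
    rw [haR, dotQ_smul, (hz1 ▸ hrR : r ∈ {x ∈ σ₁ | dotQ c₁ x = 0}).2, mul_zero]
  exact hint₁ ⟨R, ⟨c₁, hp1, hz1, hrank⟩, by rw [hz1]; exact ⟨ha₁, hdota⟩⟩

end ConeAux
namespace ConeAux

variable {n : ℕ}

lemma main_aux {σ : Set (Fin n → ℚ)} (h : GenBipyramidal σ) :
    2 ≤ coneDim σ ∧ {R | IsExtremeRay σ R}.ncard = 2 * coneDim σ - 2 := by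
  induction h with
  | simplex2 r₁ r₂ h =>
    rw [coneDim_simplex2 h, extremeRays_simplex2 h, Set.ncard_pair (rayOf_ne h)]
    norm_num
  | internal σ₁ σ₂ a h₁ h₂ hds hint₁ hint₂ ih₁ ih₂ =>
    obtain ⟨hd₁, hc₁⟩ := ih₁
    obtain ⟨hd₂, hc₂⟩ := ih₂
    obtain ⟨⟨ha₁, ha₂⟩, hspan, -⟩ := hds
    have hS₁ := genBipyramidal_posSpan h₁
    have hS₂ := genBipyramidal_posSpan h₂
    have hfin₁ : {R | IsExtremeRay σ₁ R}.Finite := by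
      by_contra hinf
      rw [Set.Infinite.ncard hinf] at hc₁
      omega
    have hfin₂ : {R | IsExtremeRay σ₂ R}.Finite := by
      by_contra hinf
      rw [Set.Infinite.ncard hinf] at hc₂
      omega
    have hne₁ : {R | IsExtremeRay σ₁ R}.Nonempty := by
      apply Set.nonempty_of_ncard_ne_zero
      rw [hc₁]
      omega
    have ha0 : a ≠ 0 := by
      intro h0
      obtain ⟨R, hR⟩ := hne₁
      obtain ⟨c, hcp, hz, hr⟩ := hR
      apply hint₁
      refine ⟨R, ⟨c, hcp, hz, hr⟩, ?_⟩
      rw [hz, h0]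
      obtain ⟨S₁, rfl⟩ := hS₁
      exact ⟨zero_mem_posSpan S₁, dotQ_zero c⟩
    have hdim : coneDim (posSpan (σ₁ ∪ σ₂)) = coneDim σ₁ + coneDim σ₂ - 1 := by
      have h1 : Submodule.span ℚ (posSpan (σ₁ ∪ σ₂)) =
          Submodule.span ℚ σ₁ ⊔ Submodule.span ℚ σ₂ := by
        rw [span_posSpan, Submodule.span_union]
      have h2 := Submodule.finrank_sup_add_finrank_inf_eq
        (Submodule.span ℚ σ₁) (Submodule.span ℚ σ₂)
      rw [hspan, finrank_span_singleton ha0] at h2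
      unfold coneDim at *
      rw [h1]
      omega
    have hposfun₁ := genBipyramidal_posFun h₁
    have hposfun₂ := genBipyramidal_posFun h₂
    have hunion : {R | IsExtremeRay (posSpan (σ₁ ∪ σ₂)) R}
        = {R | IsExtremeRay σ₁ R} ∪ {R | IsExtremeRay σ₂ R} := by
      ext R
      simp only [Set.mem_setOf_eq, Set.mem_union]
      constructor
      · exact extremeRay_descend hS₁ hS₂ ha₁ hspan hint₁
      · rintro (hR | hR)
        · exact extremeRay_lift hS₁ hS₂ ha₁ ha₂ ha0 hspan hint₁ hposfun₂ hR
        · have := extremeRay_lift hS₂ hS₁ ha₂ ha₁ ha0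
            (by rw [inf_comm]; exact hspan) hint₂ hposfun₁ hR
          rwa [Set.union_comm] at this
    have hdisj : Disjoint {R | IsExtremeRay σ₁ R} {R | IsExtremeRay σ₂ R} := by
      rw [Set.disjoint_left]
      intro R hR1 hR2
      exact extremeRay_not_both ha₁ hspan hint₁ hR1 hR2
    constructor
    · rw [hdim]
      omega
    · rw [hunion, Set.ncard_union_eq hdisj hfin₁ hfin₂, hc₁, hc₂, hdim]
      omega

end ConeAux
/-- A general bipyramidal cone of dimension `m ≥ 2` has exactly `2m - 2`
extreme rays. -/
theorem genBipyramidal_rays {n : ℕ} (σ : Set (Fin n → ℚ))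
    (hσ : GenBipyramidal σ) (m : ℕ) (hm : 2 ≤ m) (hdim : coneDim σ = m) :
    {R | IsExtremeRay σ R}.ncard = 2 * m - 2 := by
  subst hdim
  exact (ConeAux.main_aux hσ).2
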